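/- Let R be a symmetric endomorphism of Λ²V. For a 2-form η, let ρ(η) act on p-forms by ρ(η)ω = Σ_{k=1}^q (e_k ⌟ η) ∧ (e_k ⌟ ω) (the derivation extension of the skew-symmetric endomorphism X ↦ X⌟η of V). Then for all p-forms ω, φ and any orthonormal basis {ψ_r} of Λ²V, ⟨ Σ_{i,j=1}^q e_j ∧ (e_i ⌟ ρ(R(e_j∧e_i))ω), φ ⟩ = (1/4) Σ_{r,s} ⟨Rψ_r, ψ_s⟩ ⟨[ψ_r, ω], [ψ_s, φ]⟩; in particular the right-hand side is independent of the chosen orthonormal basis of Λ²V. -/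

import Mathlib

open scoped BigOperators

namespace Paper

noncomputable section

/-- Coefficients of exterior forms w.r.t. the fixed orthonormal basis `e₁,…,e_q` of `V = ℝ^q`:
a form is identified with its family of coefficients indexed by subsets of `Fin q`. -/
abbrev Ext (q : ℕ) := Finset (Fin q) → ℝ

variable {q : ℕ}

/-- `(-1)^{#{j ∈ s | j < i}}` -/
def sgn (i : Fin q) (s : Finset (Fin q)) : ℝ := (-1 : ℝ) ^ (s.filter fun j => j < i).card

/-- Exterior multiplication by the basis vector `e_i`. -/
def wB (i : Fin q) (ω : Ext q) : Ext q := fun s =>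
  if i ∈ s then sgn i (s.erase i) * ω (s.erase i) else 0

/-- Interior product (contraction) with the basis vector `e_i`. -/
def iB (i : Fin q) (ω : Ext q) : Ext q := fun s =>
  if i ∈ s then 0 else sgn i s * ω (insert i s)

/-- The basis monomial `e_{i₁} ∧ ⋯ ∧ e_{i_p}`, for `s = {i₁ < ⋯ < i_p}`. -/
def bF (s : Finset (Fin q)) : Ext q := fun t => if t = s then 1 else 0

/-- The basis vector `e_i` of `V = ℝ^q`. -/
def eB (i : Fin q) : Fin q → ℝ := Pi.single i 1

/-- Exterior multiplication by the vector `X ∈ V`. -/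
def wV (X : Fin q → ℝ) (ω : Ext q) : Ext q := ∑ i, X i • wB i ω

/-- Interior product with the vector `X ∈ V`. -/
def iV (X : Fin q → ℝ) (ω : Ext q) : Ext q := ∑ i, X i • iB i ω

/-- Clifford multiplication `X · ω = X ∧ ω − X ⌟ ω` of a vector with a form. -/
def clV (X : Fin q → ℝ) (ω : Ext q) : Ext q := wV X ω - iV X ω

/-- Clifford multiplication `e_{i₁} · e_{i₂} ⋯ e_{i_p} · ω` for `s = {i₁ < ⋯ < i_p}`. -/
def clB (s : Finset (Fin q)) (ω : Ext q) : Ext q :=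
  (Finset.sort s (· ≤ ·)).foldr (fun i τ => clV (eB i) τ) ω

/-- Clifford multiplication of two forms. -/
def clM (ω₁ ω₂ : Ext q) : Ext q := ∑ s : Finset (Fin q), ω₁ s • clB s ω₂

/-- The bracket `[ω₁, ω₂] = ω₁ · ω₂ − ω₂ · ω₁`. -/
def brkt (ω₁ ω₂ : Ext q) : Ext q := clM ω₁ ω₂ - clM ω₂ ω₁

/-- Exterior multiplication by the monomial `e_{i₁} ∧ ⋯ ∧ e_{i_p}`. -/
def wBs (s : Finset (Fin q)) (ω : Ext q) : Ext q :=
  (Finset.sort s (· ≤ ·)).foldr (fun i τ => wB i τ) ω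

/-- The wedge product of two forms. -/
def wM (ω₁ ω₂ : Ext q) : Ext q := ∑ s : Finset (Fin q), ω₁ s • wBs s ω₂

/-- The inner product on forms, for which the basis monomials are orthonormal. -/
def ip (ω φ : Ext q) : ℝ := ∑ s : Finset (Fin q), ω s * φ s

/-- `ω` is a form of (pure) degree `p`. -/
def homog (p : ℕ) (ω : Ext q) : Prop := ∀ s : Finset (Fin q), s.card ≠ p → ω s = 0

/-- The inner product of two vectors of `V = ℝ^q`. -/
def dotP (X Y : Fin q → ℝ) : ℝ := ∑ i, X i * Y i

/-- A vector of `V` regarded as a 1-form. -/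
def oneF (X : Fin q → ℝ) : Ext q := ∑ i, X i • bF {i}

/-- The wedge `X ∧ Y` of two vectors. -/
def w2 (X Y : Fin q → ℝ) : Ext q := wV X (oneF Y)

/-- Two-element subsets, indexing the canonical orthonormal basis of `Λ²V`. -/
def twoSets (q : ℕ) : Finset (Finset (Fin q)) := Finset.univ.filter fun s => s.card = 2

/-- The Bochner operator quadratic form `⟨B_R^{[p]} ω, φ⟩ =
(1/4) Σ_{r,s} ⟨R ψ_r, ψ_s⟩ ⟨[ψ_r,ω],[ψ_s,φ]⟩`, computed in the canonical
orthonormal basis `{e_i ∧ e_j}_{i<j}` of `Λ²V`. -/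
def Bform (R : Ext q →ₗ[ℝ] Ext q) (ω φ : Ext q) : ℝ :=
  (1 / 4 : ℝ) * ∑ s ∈ twoSets q, ∑ t ∈ twoSets q,
    ip (R (bF s)) (bF t) * ip (brkt (bF s) ω) (brkt (bF t) φ)
-- Auxiliary lemmas
lemma sgn_sq (i : Fin q) (s : Finset (Fin q)) : sgn i s * sgn i s = 1 := by
  unfold sgn
  rw [← pow_add]
  exact (neg_one_pow_eq_one_iff_even (by norm_num)).2 (Even.add_self _)

lemma sgn_insert (i j : Fin q) (s : Finset (Fin q)) (h : j ∉ s) :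
    sgn i (insert j s) = (if j < i then -1 else 1) * sgn i s := by
  unfold sgn
  rw [Finset.filter_insert]
  by_cases hj : j < i
  · rw [if_pos hj, Finset.card_insert_of_notMem (by simp [h]), if_pos hj, pow_succ]
    ring
  · rw [if_neg hj, if_neg hj, one_mul]

lemma sgn_erase (i j : Fin q) (s : Finset (Fin q)) (h : j ∈ s) :
    sgn i (s.erase j) = (if j < i then -1 else 1) * sgn i s := by
  have h2 : j ∉ s.erase j := Finset.notMem_erase j s
  have := sgn_insert i j (s.erase j) h2
  rw [Finset.insert_erase h] at this
  rw [this]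
  by_cases hj : j < i <;> simp [hj]
lemma sgn_flip {i j : Fin q} (h : i ≠ j) :
    (if j < i then (-1:ℝ) else 1) = -(if i < j then -1 else 1) := by
  rcases lt_or_gt_of_ne h with hc | hc
  · simp [asymm hc, hc]
  · simp [hc, asymm hc]

lemma wB_wB_self (i : Fin q) (ω : Ext q) : wB i (wB i ω) = 0 := by
  funext s
  simp only [wB, Pi.zero_apply]
  by_cases h : i ∈ s
  · rw [if_pos h, if_neg (Finset.notMem_erase i s), mul_zero]
  · rw [if_neg h]

lemma iB_iB_self (i : Fin q) (ω : Ext q) : iB i (iB i ω) = 0 := by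
  funext s
  simp only [iB, Pi.zero_apply]
  by_cases h : i ∈ s
  · rw [if_pos h]
  · rw [if_neg h, if_pos (Finset.mem_insert_self i s), mul_zero]

lemma wB_iB_self (i : Fin q) (ω : Ext q) :
    wB i (iB i ω) = fun s => if i ∈ s then ω s else 0 := by
  funext s
  simp only [wB, iB]
  by_cases h : i ∈ s
  · rw [if_pos h, if_pos h, if_neg (Finset.notMem_erase i s),
      Finset.insert_erase h, ← mul_assoc, sgn_sq, one_mul]
  · rw [if_neg h, if_neg h]

lemma iB_wB_self (i : Fin q) (ω : Ext q) :
    iB i (wB i ω) = fun s => if i ∈ s then 0 else ω s := by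
  funext s
  simp only [wB, iB]
  by_cases h : i ∈ s
  · rw [if_pos h, if_pos h]
  · rw [if_neg h, if_neg h, if_pos (Finset.mem_insert_self i s),
      Finset.erase_insert h, ← mul_assoc, sgn_sq, one_mul]

lemma wB_wB_swap {i j : Fin q} (h : i ≠ j) (ω : Ext q) :
    wB i (wB j ω) = - wB j (wB i ω) := by
  funext s
  simp only [wB, Pi.neg_apply]
  by_cases hi : i ∈ s
  · by_cases hj : j ∈ s
    · have hji : j ∈ s.erase i := Finset.mem_erase.2 ⟨h.symm, hj⟩
      have hij : i ∈ s.erase j := Finset.mem_erase.2 ⟨h, hi⟩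
      rw [if_pos hi, if_pos hj, if_pos hji, if_pos hij]
      have hcomm : (s.erase i).erase j = (s.erase j).erase i := by
        ext x; simp only [Finset.mem_erase]; tauto
      rw [← hcomm]
      rw [sgn_erase j j (s.erase i) hji, sgn_erase i j (s.erase i) hji,
        sgn_erase i i s hi, sgn_erase j i s hi, sgn_erase j j s hj,
        if_neg (lt_irrefl i), if_neg (lt_irrefl j), sgn_flip h]
      ring
    · rw [if_pos hi, if_neg hj, if_neg (fun hc => hj (Finset.mem_of_mem_erase hc)),
        mul_zero, neg_zero]
  · by_cases hj : j ∈ s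
    · rw [if_neg hi, if_pos hj, if_neg (fun hc => hi (Finset.mem_of_mem_erase hc)),
        mul_zero, neg_zero]
    · rw [if_neg hi, if_neg hj, neg_zero]

lemma iB_iB_swap {i j : Fin q} (h : i ≠ j) (ω : Ext q) :
    iB i (iB j ω) = - iB j (iB i ω) := by
  funext s
  simp only [iB, Pi.neg_apply]
  by_cases hi : i ∈ s
  · by_cases hj : j ∈ s
    · rw [if_pos hi, if_pos hj, neg_zero]
    · rw [if_pos hi, if_neg hj, if_pos (Finset.mem_insert_of_mem hi), mul_zero, neg_zero]
  · by_cases hj : j ∈ s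
    · rw [if_neg hi, if_pos hj, if_pos (Finset.mem_insert_of_mem hj), mul_zero, neg_zero]
    · rw [if_neg hi, if_neg hj,
        if_neg (by simp [Finset.mem_insert, h.symm, hj]),
        if_neg (by simp [Finset.mem_insert, h, hi]),
        Finset.insert_comm, sgn_insert j i s hi, sgn_insert i j s hj, sgn_flip h.symm]
      ring
lemma wB_iB_swap {i j : Fin q} (h : i ≠ j) (ω : Ext q) :
    wB i (iB j ω) = - iB j (wB i ω) := by
  funext s
  simp only [wB, iB, Pi.neg_apply]
  by_cases hi : i ∈ s
  · by_cases hj : j ∈ s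
    · rw [if_pos hi, if_pos (Finset.mem_erase.2 ⟨h.symm, hj⟩), mul_zero, if_pos hj, neg_zero]
    · have hj' : j ∉ s.erase i := fun hc => hj (Finset.mem_of_mem_erase hc)
      rw [if_pos hi, if_neg hj', if_neg hj,
        if_pos (Finset.mem_insert_of_mem hi),
        Finset.erase_insert_of_ne h.symm,
        sgn_insert i j (s.erase i) hj', sgn_erase i i s hi, sgn_erase j i s hi,
        if_neg (lt_irrefl i), sgn_flip h]
      ring
  · by_cases hj : j ∈ s
    · rw [if_neg hi, if_pos hj, neg_zero]
    · rw [if_neg hi, if_neg hj, if_neg (by simp [Finset.mem_insert, h, hi]),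
        mul_zero, neg_zero]
lemma wB_sum {ι : Type*} (A : Finset ι) (f : ι → Ext q) (i : Fin q) :
    wB i (∑ x ∈ A, f x) = ∑ x ∈ A, wB i (f x) := by
  funext s
  simp only [wB, Finset.sum_apply]
  by_cases h : i ∈ s
  · simp [h, Finset.mul_sum]
  · simp [h]

lemma iB_sum {ι : Type*} (A : Finset ι) (f : ι → Ext q) (i : Fin q) :
    iB i (∑ x ∈ A, f x) = ∑ x ∈ A, iB i (f x) := by
  funext s
  simp only [iB, Finset.sum_apply]
  by_cases h : i ∈ s
  · simp [h]
  · simp [h, Finset.mul_sum]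

lemma wB_smul (c : ℝ) (i : Fin q) (ω : Ext q) : wB i (c • ω) = c • wB i ω := by
  funext s
  simp only [wB, Pi.smul_apply, smul_eq_mul]
  by_cases h : i ∈ s <;> simp [h] <;> ring

lemma iB_smul (c : ℝ) (i : Fin q) (ω : Ext q) : iB i (c • ω) = c • iB i ω := by
  funext s
  simp only [iB, Pi.smul_apply, smul_eq_mul]
  by_cases h : i ∈ s <;> simp [h] <;> ring

lemma wB_add (i : Fin q) (ω φ : Ext q) : wB i (ω + φ) = wB i ω + wB i φ := by
  funext s
  simp only [wB, Pi.add_apply]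
  by_cases h : i ∈ s <;> simp [h] <;> ring

lemma iB_add (i : Fin q) (ω φ : Ext q) : iB i (ω + φ) = iB i ω + iB i φ := by
  funext s
  simp only [iB, Pi.add_apply]
  by_cases h : i ∈ s <;> simp [h] <;> ring

lemma wB_neg (i : Fin q) (ω : Ext q) : wB i (-ω) = - wB i ω := by
  funext s
  simp only [wB, Pi.neg_apply]
  by_cases h : i ∈ s <;> simp [h]

lemma iB_neg (i : Fin q) (ω : Ext q) : iB i (-ω) = - iB i ω := by
  funext s
  simp only [iB, Pi.neg_apply]
  by_cases h : i ∈ s <;> simp [h]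

lemma wB_sub (i : Fin q) (ω φ : Ext q) : wB i (ω - φ) = wB i ω - wB i φ := by
  rw [sub_eq_add_neg, wB_add, wB_neg, sub_eq_add_neg]

lemma iB_sub (i : Fin q) (ω φ : Ext q) : iB i (ω - φ) = iB i ω - iB i φ := by
  rw [sub_eq_add_neg, iB_add, iB_neg, sub_eq_add_neg]

/-- The grading involution `ω ↦ (-1)^{deg} ω`. -/
def gr (ω : Ext q) : Ext q := fun s => (-1 : ℝ) ^ s.card * ω s

lemma gr_gr (ω : Ext q) : gr (gr ω) = ω := by
  funext s
  simp only [gr, ← mul_assoc, ← pow_add]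
  rw [(neg_one_pow_eq_one_iff_even (by norm_num : (-1:ℝ) ≠ 1)).2 (Even.add_self _), one_mul]

lemma gr_wB (i : Fin q) (ω : Ext q) : gr (wB i ω) = - wB i (gr ω) := by
  funext s
  simp only [gr, wB, Pi.neg_apply]
  by_cases h : i ∈ s
  · rw [if_pos h, if_pos h]
    have hc : s.card = (s.erase i).card + 1 := (Finset.card_erase_add_one h).symm
    rw [hc, pow_succ]
    ring
  · simp [h]

lemma gr_iB (i : Fin q) (ω : Ext q) : gr (iB i ω) = - iB i (gr ω) := by
  funext s
  simp only [gr, iB, Pi.neg_apply]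
  by_cases h : i ∈ s
  · simp [h]
  · rw [if_neg h, if_neg h, Finset.card_insert_of_notMem h, pow_succ]
    ring

lemma gr_add (ω φ : Ext q) : gr (ω + φ) = gr ω + gr φ := by
  funext s; simp [gr]; ring

lemma gr_smul (c : ℝ) (ω : Ext q) : gr (c • ω) = c • gr ω := by
  funext s; simp [gr]; ring

lemma gr_sum {ι : Type*} (A : Finset ι) (f : ι → Ext q) :
    gr (∑ x ∈ A, f x) = ∑ x ∈ A, gr (f x) := by
  funext s; simp [gr, Finset.sum_apply, Finset.mul_sum]

lemma ip_comm (ω φ : Ext q) : ip ω φ = ip φ ω := by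
  unfold ip; exact Finset.sum_congr rfl fun s _ => mul_comm _ _

lemma ip_sum_left {ι : Type*} (A : Finset ι) (f : ι → Ext q) (φ : Ext q) :
    ip (∑ x ∈ A, f x) φ = ∑ x ∈ A, ip (f x) φ := by
  unfold ip
  rw [Finset.sum_comm]
  exact Finset.sum_congr rfl fun s _ => by rw [Finset.sum_apply, Finset.sum_mul]

lemma ip_sum_right {ι : Type*} (A : Finset ι) (f : ι → Ext q) (φ : Ext q) :
    ip φ (∑ x ∈ A, f x) = ∑ x ∈ A, ip φ (f x) := by
  rw [ip_comm, ip_sum_left]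
  exact Finset.sum_congr rfl fun s _ => ip_comm _ _

lemma ip_smul_left (c : ℝ) (ω φ : Ext q) : ip (c • ω) φ = c * ip ω φ := by
  unfold ip
  rw [Finset.mul_sum]
  exact Finset.sum_congr rfl fun s _ => by simp; ring

lemma ip_smul_right (c : ℝ) (ω φ : Ext q) : ip φ (c • ω) = c * ip φ ω := by
  rw [ip_comm, ip_smul_left, ip_comm]

lemma ip_sub_left (ω₁ ω₂ φ : Ext q) : ip (ω₁ - ω₂) φ = ip ω₁ φ - ip ω₂ φ := by
  unfold ip
  rw [← Finset.sum_sub_distrib]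
  exact Finset.sum_congr rfl fun s _ => by simp; ring

lemma ip_sub_right (ω₁ ω₂ φ : Ext q) : ip φ (ω₁ - ω₂) = ip φ ω₁ - ip φ ω₂ := by
  rw [ip_comm, ip_sub_left, ip_comm ω₁, ip_comm ω₂]

lemma ip_bF_left (u : Finset (Fin q)) (φ : Ext q) : ip (bF u) φ = φ u := by
  unfold ip bF
  rw [Finset.sum_eq_single u] <;> simp +contextual

lemma ip_bF_right (u : Finset (Fin q)) (φ : Ext q) : ip φ (bF u) = φ u := by
  rw [ip_comm, ip_bF_left]

lemma ip_wB (i : Fin q) (ω φ : Ext q) : ip (wB i ω) φ = ip ω (iB i φ) := by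
  unfold ip wB iB
  rw [← Finset.sum_filter_add_sum_filter_not Finset.univ (fun s => i ∈ s)]
  conv_rhs => rw [← Finset.sum_filter_add_sum_filter_not Finset.univ (fun s => i ∈ s)]
  have h1 : ∑ s ∈ Finset.univ.filter (fun s => ¬ i ∈ s),
      (if i ∈ s then sgn i (s.erase i) * ω (s.erase i) else 0) * φ s = 0 :=
    Finset.sum_eq_zero (by intro s hs; simp only [Finset.mem_filter] at hs; simp [hs.2])
  have h2 : ∑ s ∈ Finset.univ.filter (fun s => i ∈ s),
      ω s * (if i ∈ s then 0 else sgn i s * φ (insert i s)) = 0 :=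
    Finset.sum_eq_zero (by intro s hs; simp only [Finset.mem_filter] at hs; simp [hs.2])
  rw [h1, h2, add_zero, zero_add]
  refine Finset.sum_nbij' (fun s => s.erase i) (fun t => insert i t) ?_ ?_ ?_ ?_ ?_
  · intro s hs
    simp only [Finset.mem_filter] at *
    exact ⟨Finset.mem_univ _, Finset.notMem_erase i s⟩
  · intro t ht
    simp only [Finset.mem_filter] at *
    exact ⟨Finset.mem_univ _, Finset.mem_insert_self i t⟩
  · intro s hs
    simp only [Finset.mem_filter] at hs
    exact Finset.insert_erase hs.2
  · intro t ht
    simp only [Finset.mem_filter] at ht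
    exact Finset.erase_insert ht.2
  · intro s hs
    simp only [Finset.mem_filter] at hs
    rw [if_pos hs.2, if_neg (Finset.notMem_erase i s), Finset.insert_erase hs.2]
    ring

lemma ip_iB (i : Fin q) (ω φ : Ext q) : ip (iB i ω) φ = ip ω (wB i φ) := by
  rw [ip_comm, ← ip_wB, ip_comm]
lemma gr_sub (ω φ : Ext q) : gr (ω - φ) = gr ω - gr φ := by
  funext s; simp [gr]; ring

lemma sgn_empty (i : Fin q) : sgn i (∅ : Finset (Fin q)) = 1 := by simp [sgn]

lemma oneF_eB (i : Fin q) : oneF (eB i) = bF {i} := by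
  unfold oneF
  rw [Finset.sum_eq_single i]
  · simp [eB]
  · intro m _ hm; simp [eB, Pi.single_apply, hm]
  · simp

lemma wV_eB (i : Fin q) (ω : Ext q) : wV (eB i) ω = wB i ω := by
  unfold wV
  rw [Finset.sum_eq_single i]
  · simp [eB]
  · intro m _ hm; simp [eB, Pi.single_apply, hm]
  · simp

lemma iV_eB (i : Fin q) (ω : Ext q) : iV (eB i) ω = iB i ω := by
  unfold iV
  rw [Finset.sum_eq_single i]
  · simp [eB]
  · intro m _ hm; simp [eB, Pi.single_apply, hm]
  · simp

lemma clV_eB (i : Fin q) (ω : Ext q) : clV (eB i) ω = wB i ω - iB i ω := by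
  unfold clV; rw [wV_eB, iV_eB]

lemma w2_eB (j i : Fin q) : w2 (eB j) (eB i) = wB j (bF {i}) := by
  unfold w2; rw [oneF_eB, wV_eB]

lemma wB_bF {i : Fin q} {t : Finset (Fin q)} (h : i ∉ t) :
    wB i (bF t) = sgn i t • bF (insert i t) := by
  funext s
  simp only [wB, bF, Pi.smul_apply, smul_eq_mul]
  by_cases hs : s = insert i t
  · rw [if_pos hs, if_pos (hs ▸ Finset.mem_insert_self i t)]
    subst hs
    rw [Finset.erase_insert h, if_pos rfl, mul_one]
  · rw [if_neg hs]
    by_cases hi : i ∈ s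
    · rw [if_pos hi, if_neg (fun hc : s.erase i = t => hs (by rw [← hc, Finset.insert_erase hi])),
        mul_zero, mul_zero]
    · rw [if_neg hi, mul_zero]

lemma iB_bF {i : Fin q} {t : Finset (Fin q)} (h : i ∉ t) : iB i (bF t) = 0 := by
  funext s
  simp only [iB, bF, Pi.zero_apply]
  by_cases hi : i ∈ s
  · rw [if_pos hi]
  · rw [if_neg hi, if_neg (fun hc : insert i s = t => h (hc ▸ Finset.mem_insert_self i s)),
      mul_zero]

lemma gr_bF (t : Finset (Fin q)) : gr (bF t) = ((-1 : ℝ) ^ t.card) • bF t := by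
  funext s
  simp only [gr, bF, Pi.smul_apply, smul_eq_mul]
  by_cases hs : s = t
  · subst hs; rw [if_pos rfl]
  · rw [if_neg hs, mul_zero, mul_zero]

/-- Right Clifford multiplication by the basis vector `e_i`. -/
def Rr (i : Fin q) (ω : Ext q) : Ext q := wB i (gr ω) + iB i (gr ω)

lemma Rr_smul (c : ℝ) (i : Fin q) (ω : Ext q) : Rr i (c • ω) = c • Rr i ω := by
  unfold Rr; rw [gr_smul, wB_smul, iB_smul, smul_add]

lemma Rr_sum {ι : Type*} (A : Finset ι) (f : ι → Ext q) (i : Fin q) :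
    Rr i (∑ x ∈ A, f x) = ∑ x ∈ A, Rr i (f x) := by
  unfold Rr; rw [gr_sum, wB_sum, iB_sum, ← Finset.sum_add_distrib]

lemma clV_Rr (i j : Fin q) (ω : Ext q) : clV (eB j) (Rr i ω) = Rr i (clV (eB j) ω) := by
  unfold Rr
  rw [clV_eB, clV_eB, gr_sub, gr_wB, gr_iB]
  set τ := gr ω with hτ
  rw [wB_add, iB_add, wB_sub, iB_sub, wB_neg, iB_neg, wB_neg, iB_neg]
  by_cases h : i = j
  · subst h
    rw [wB_wB_self, iB_iB_self]
    abel
  · have h1 := wB_wB_swap (Ne.symm h) τ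
    have h2 := wB_iB_swap (Ne.symm h) τ
    have h3 : iB j (wB i τ) = -(wB i (iB j τ)) := by rw [wB_iB_swap h τ, neg_neg]
    have h4 := iB_iB_swap (Ne.symm h) τ
    rw [h1, h2, h3, h4]
    abel

lemma foldr_clV_bF (l : List (Fin q)) (hl : l.Pairwise (· < ·)) :
    List.foldr (fun i τ => clV (eB i) τ) (bF ∅) l = bF l.toFinset := by
  induction l with
  | nil => simp
  | cons a l ih =>
    have hl' : l.Pairwise (· < ·) := hl.of_cons
    have ha : a ∉ l.toFinset := by
      simp only [List.mem_toFinset]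
      intro hc
      exact lt_irrefl a (List.rel_of_pairwise_cons hl hc)
    rw [List.foldr_cons, ih hl', clV_eB, wB_bF ha, iB_bF ha]
    have hsgn : sgn a l.toFinset = 1 := by
      unfold sgn
      rw [Finset.filter_eq_empty_iff.2 (fun {b} hb => asymm (List.rel_of_pairwise_cons hl (List.mem_toFinset.1 hb)))]
      simp
    rw [hsgn, one_smul, sub_zero, List.toFinset_cons]

lemma clB_one (s : Finset (Fin q)) : clB s (bF ∅) = bF s := by
  unfold clB
  rw [foldr_clV_bF _ (Finset.sortedLT_sort s).pairwise, Finset.sort_toFinset]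

lemma sum_coeff (ω : Ext q) : ∑ s : Finset (Fin q), ω s • bF s = ω := by
  funext t
  rw [Finset.sum_apply, Finset.sum_eq_single t]
  · simp [bF]
  · intro s _ hs; simp [bF, Ne.symm hs]
  · simp

lemma clM_one (ω : Ext q) : clM ω (bF ∅) = ω := by
  unfold clM
  conv_rhs => rw [← sum_coeff ω]
  exact Finset.sum_congr rfl fun s _ => by rw [clB_one]

lemma Rr_one (i : Fin q) : Rr i (bF ∅) = bF {i} := by
  unfold Rr
  rw [gr_bF, Finset.card_empty, pow_zero, one_smul, wB_bF (Finset.notMem_empty i),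
    iB_bF (Finset.notMem_empty i), sgn_empty, one_smul, add_zero]
  simp

lemma Rr_Rr_one {i j : Fin q} (h : i < j) : Rr j (Rr i (bF ∅)) = bF {i, j} := by
  rw [Rr_one]
  unfold Rr
  rw [gr_bF, Finset.card_singleton, pow_one]
  have hj : j ∉ ({i} : Finset (Fin q)) := by simp [(h.ne').symm, h.ne']
  rw [wB_smul, iB_smul, wB_bF hj, iB_bF hj, smul_zero, add_zero, smul_smul]
  have hsgn : sgn j ({i} : Finset (Fin q)) = -1 := by
    unfold sgn
    rw [Finset.filter_singleton, if_pos h]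
    simp
  rw [hsgn]
  norm_num
  rw [Finset.pair_comm]

lemma sort_pair {i j : Fin q} (h : i < j) :
    Finset.sort ({i, j} : Finset (Fin q)) (· ≤ ·) = [i, j] := by
  apply List.Perm.eq_of_pairwise' (Finset.pairwise_sort _ _)
  · exact List.pairwise_cons.2 ⟨by simp [h.le], List.pairwise_singleton _ j⟩
  · apply List.perm_of_nodup_nodup_toFinset_eq (Finset.sort_nodup _ _)
    · simp [h.ne]
    · rw [Finset.sort_toFinset]
      simp

lemma clB_pair {i j : Fin q} (h : i < j) (ω : Ext q) :
    clB {i, j} ω = clV (eB i) (clV (eB j) ω) := by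
  unfold clB
  rw [sort_pair h]
  rfl

lemma clM_bF_left (u : Finset (Fin q)) (ω : Ext q) : clM (bF u) ω = clB u ω := by
  unfold clM
  rw [Finset.sum_eq_single u]
  · simp [bF]
  · intro s _ hs; simp [bF, hs]
  · simp

lemma clM_Rr (k : Fin q) (ω ψ : Ext q) : clM ω (Rr k ψ) = Rr k (clM ω ψ) := by
  unfold clM
  rw [Rr_sum]
  refine Finset.sum_congr rfl fun s _ => ?_
  rw [Rr_smul]
  congr 1
  unfold clB
  induction (Finset.sort s (· ≤ ·)) with
  | nil => rfl
  | cons a l ih => rw [List.foldr_cons, List.foldr_cons, ih, clV_Rr]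

lemma clM_bF_pair_right {i j : Fin q} (h : i < j) (ω : Ext q) :
    clM ω (bF {i, j}) = Rr j (Rr i ω) := by
  rw [← Rr_Rr_one h, clM_Rr, clM_Rr, clM_one]

lemma brkt_pair {i j : Fin q} (h : i < j) (ω : Ext q) :
    brkt (bF {i, j}) ω = (2 : ℝ) • (wB j (iB i ω) - wB i (iB j ω)) := by
  unfold brkt
  rw [clM_bF_left, clB_pair h, clM_bF_pair_right h, clV_eB, clV_eB]
  unfold Rr
  rw [gr_add, gr_wB, gr_iB, gr_gr]
  have hne : i ≠ j := h.ne
  rw [wB_sub, iB_sub, wB_add, iB_add, wB_neg, iB_neg, wB_neg, iB_neg]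
  have a1 := wB_wB_swap hne ω
  have a3 : iB i (wB j ω) = -(wB j (iB i ω)) := by rw [wB_iB_swap (Ne.symm hne), neg_neg]
  have a4 := iB_iB_swap hne ω
  have a5 : iB j (wB i ω) = -(wB i (iB j ω)) := by rw [wB_iB_swap hne, neg_neg]
  rw [a1, a3, a4, a5, two_smul]
  abel
lemma ip_zero_left (φ : Ext q) : ip 0 φ = 0 := by unfold ip; simp

lemma ip_zero_right (φ : Ext q) : ip φ 0 = 0 := by unfold ip; simp

lemma ip_neg_left (ω φ : Ext q) : ip (-ω) φ = - ip ω φ := by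
  unfold ip; rw [← Finset.sum_neg_distrib]; exact Finset.sum_congr rfl fun s _ => by simp

lemma ip_neg_right (ω φ : Ext q) : ip φ (-ω) = - ip φ ω := by
  rw [ip_comm, ip_neg_left, ip_comm]

lemma sgn_singleton (i j : Fin q) : sgn i ({j} : Finset (Fin q)) = if j < i then -1 else 1 := by
  unfold sgn
  rw [Finset.filter_singleton]
  by_cases h : j < i <;> simp [h]

lemma wB_bF_self (a : Fin q) : wB a (bF ({a} : Finset (Fin q))) = 0 := by
  funext s
  simp only [wB, bF, Pi.zero_apply]
  by_cases h : a ∈ s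
  · rw [if_pos h, if_neg (fun hc : s.erase a = {a} =>
      (Finset.notMem_erase a s) (hc ▸ Finset.mem_singleton_self a)), mul_zero]
  · rw [if_neg h]

lemma w2_self (a : Fin q) : w2 (eB a) (eB a) = 0 := by
  rw [w2_eB, wB_bF_self]

lemma w2_lt {i j : Fin q} (h : i < j) : w2 (eB i) (eB j) = bF {i, j} := by
  rw [w2_eB, wB_bF (by simp [h.ne]), sgn_singleton, if_neg (asymm h), one_smul]

lemma w2_gt {i j : Fin q} (h : i < j) : w2 (eB j) (eB i) = -bF {i, j} := by
  rw [w2_eB, wB_bF (by simp [h.ne']), sgn_singleton, if_pos h]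
  rw [show insert j ({i} : Finset (Fin q)) = {i, j} from Finset.pair_comm j i ▸ rfl]
  funext s; simp

lemma clV_eB_smul (c : ℝ) (i : Fin q) (ω : Ext q) :
    clV (eB i) (c • ω) = c • clV (eB i) ω := by
  rw [clV_eB, clV_eB, wB_smul, iB_smul, smul_sub]

lemma clV_eB_sum {ι : Type*} (A : Finset ι) (f : ι → Ext q) (i : Fin q) :
    clV (eB i) (∑ x ∈ A, f x) = ∑ x ∈ A, clV (eB i) (f x) := by
  rw [clV_eB, wB_sum, iB_sum, ← Finset.sum_sub_distrib]
  exact Finset.sum_congr rfl fun x _ => (clV_eB i (f x)).symm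

lemma clB_smul (c : ℝ) (s : Finset (Fin q)) (ω : Ext q) :
    clB s (c • ω) = c • clB s ω := by
  unfold clB
  induction (Finset.sort s (· ≤ ·)) with
  | nil => rfl
  | cons a l ih => rw [List.foldr_cons, List.foldr_cons, ih, clV_eB_smul]

lemma clB_sum {ι : Type*} (A : Finset ι) (f : ι → Ext q) (s : Finset (Fin q)) :
    clB s (∑ x ∈ A, f x) = ∑ x ∈ A, clB s (f x) := by
  unfold clB
  induction (Finset.sort s (· ≤ ·)) with
  | nil => rfl
  | cons a l ih => rw [List.foldr_cons, ih, clV_eB_sum]; rfl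

lemma clM_sum_smul_left {ι : Type*} (A : Finset ι) (c : ι → ℝ) (v : ι → Ext q) (ω : Ext q) :
    clM (∑ x ∈ A, c x • v x) ω = ∑ x ∈ A, c x • clM (v x) ω := by
  unfold clM
  have h1 : ∀ s : Finset (Fin q), (∑ x ∈ A, c x • v x) s = ∑ x ∈ A, c x * v x s := by
    intro s; rw [Finset.sum_apply]; rfl
  calc ∑ s : Finset (Fin q), (∑ x ∈ A, c x • v x) s • clB s ω
      = ∑ s : Finset (Fin q), ∑ x ∈ A, (c x * v x s) • clB s ω := by
        refine Finset.sum_congr rfl fun s _ => ?_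
        rw [h1, Finset.sum_smul]
    _ = ∑ x ∈ A, ∑ s : Finset (Fin q), (c x * v x s) • clB s ω := Finset.sum_comm
    _ = ∑ x ∈ A, c x • ∑ s : Finset (Fin q), v x s • clB s ω := by
        refine Finset.sum_congr rfl fun x _ => ?_
        rw [Finset.smul_sum]
        exact Finset.sum_congr rfl fun s _ => by rw [mul_smul]

lemma clM_sum_smul_right {ι : Type*} (A : Finset ι) (c : ι → ℝ) (v : ι → Ext q) (ω : Ext q) :
    clM ω (∑ x ∈ A, c x • v x) = ∑ x ∈ A, c x • clM ω (v x) := by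
  unfold clM
  calc ∑ s : Finset (Fin q), ω s • clB s (∑ x ∈ A, c x • v x)
      = ∑ s : Finset (Fin q), ∑ x ∈ A, c x • (ω s • clB s (v x)) := by
        refine Finset.sum_congr rfl fun s _ => ?_
        rw [clB_sum, Finset.smul_sum]
        refine Finset.sum_congr rfl fun x _ => ?_
        rw [clB_smul, smul_comm]
    _ = ∑ x ∈ A, c x • ∑ s : Finset (Fin q), ω s • clB s (v x) := by
        rw [Finset.sum_comm]
        exact Finset.sum_congr rfl fun x _ => (Finset.smul_sum).symm

lemma brkt_sum_smul_left {ι : Type*} (A : Finset ι) (c : ι → ℝ) (v : ι → Ext q) (ω : Ext q) :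
    brkt (∑ x ∈ A, c x • v x) ω = ∑ x ∈ A, c x • brkt (v x) ω := by
  unfold brkt
  rw [clM_sum_smul_left, clM_sum_smul_right, ← Finset.sum_sub_distrib]
  exact Finset.sum_congr rfl fun x _ => (smul_sub _ _ _).symm

lemma homog_iB {n : ℕ} {η : Ext q} (h : homog (n + 1) η) (k : Fin q) :
    homog n (iB k η) := by
  intro s hs
  unfold iB
  by_cases hk : k ∈ s
  · rw [if_pos hk]
  · rw [if_neg hk, h (insert k s) (by rw [Finset.card_insert_of_notMem hk]; omega), mul_zero]

lemma homog_w2 (a b : Fin q) : homog 2 (w2 (eB a) (eB b)) := by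
  rcases lt_trichotomy a b with h | h | h
  · rw [w2_lt h]
    intro s hs
    unfold bF
    rw [if_neg (fun hc : s = {a, b} => hs (by rw [hc, Finset.card_pair h.ne]))]
  · subst h; rw [w2_self]; intro s _; rfl
  · rw [w2_gt h]
    intro s hs
    simp only [Pi.neg_apply, bF]
    rw [if_neg (fun hc : s = {b, a} => hs (by rw [hc, Finset.card_pair h.ne]))]
    exact neg_zero

lemma homog_expand {η : Ext q} (h : homog 2 η) :
    η = ∑ u ∈ twoSets q, η u • bF u := by
  funext t
  rw [Finset.sum_apply]
  by_cases ht : t ∈ twoSets q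
  · rw [Finset.sum_eq_single t]
    · simp [bF]
    · intro u _ hu; simp [bF, hu, Ne.symm hu]
    · intro hc; exact absurd ht hc
  · rw [h t (by simpa [twoSets] using ht), Finset.sum_eq_zero]
    intro u hu
    have : t ≠ u := fun hc => ht (hc ▸ hu)
    simp [bF, this]

lemma wM_one_form {ξ : Ext q} (h : homog 1 ξ) (τ : Ext q) :
    wM ξ τ = ∑ m : Fin q, ξ {m} • wB m τ := by
  unfold wM
  rw [← Finset.sum_subset (Finset.subset_univ
    ((Finset.univ : Finset (Fin q)).image fun m => ({m} : Finset (Fin q))))]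
  · rw [Finset.sum_image (fun a _ b _ hc => Finset.singleton_injective hc)]
    refine Finset.sum_congr rfl fun m _ => ?_
    congr 1
    unfold wBs
    rw [Finset.sort_singleton]
    rfl
  · intro s _ hs
    rw [h s, zero_smul]
    intro hc
    rw [Finset.card_eq_one] at hc
    obtain ⟨a, rfl⟩ := hc
    exact hs (Finset.mem_image.2 ⟨a, Finset.mem_univ a, rfl⟩)

lemma iB_coeff (k m : Fin q) (ξ : Ext q) :
    iB k ξ {m} = ip ξ (w2 (eB k) (eB m)) := by
  rw [w2_eB, ip_comm, ip_wB, ip_bF_left]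
lemma sum_split (f : Fin q → Fin q → ℝ) (hdiag : ∀ a, f a a = 0) :
    ∑ a : Fin q, ∑ b : Fin q, f a b
      = ∑ p ∈ (Finset.univ ×ˢ Finset.univ).filter (fun p : Fin q × Fin q => p.1 < p.2),
          (f p.1 p.2 + f p.2 p.1) := by
  rw [← Finset.sum_product']
  rw [← Finset.sum_filter_add_sum_filter_not (Finset.univ ×ˢ Finset.univ)
    (fun p : Fin q × Fin q => p.1 < p.2)]
  rw [← Finset.sum_filter_add_sum_filter_not
    (((Finset.univ : Finset (Fin q)) ×ˢ Finset.univ).filter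
      (fun p : Fin q × Fin q => ¬ p.1 < p.2)) (fun p : Fin q × Fin q => p.2 < p.1)]
  have h0 : ∑ p ∈ ((((Finset.univ : Finset (Fin q)) ×ˢ Finset.univ).filter
      (fun p : Fin q × Fin q => ¬ p.1 < p.2)).filter (fun p : Fin q × Fin q => ¬ p.2 < p.1)),
      f p.1 p.2 = 0 := by
    refine Finset.sum_eq_zero fun p hp => ?_
    simp only [Finset.mem_filter] at hp
    have : p.1 = p.2 := le_antisymm (not_lt.1 hp.2) (not_lt.1 hp.1.2)
    rw [this, hdiag]
  rw [h0, add_zero]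
  have h1 : ∑ p ∈ ((((Finset.univ : Finset (Fin q)) ×ˢ Finset.univ).filter
      (fun p : Fin q × Fin q => ¬ p.1 < p.2)).filter (fun p : Fin q × Fin q => p.2 < p.1)),
      f p.1 p.2
      = ∑ p ∈ ((Finset.univ : Finset (Fin q)) ×ˢ Finset.univ).filter
          (fun p : Fin q × Fin q => p.1 < p.2), f p.2 p.1 := by
    refine Finset.sum_nbij' (fun p => (p.2, p.1)) (fun p => (p.2, p.1)) ?_ ?_ ?_ ?_ ?_
    · intro p hp
      simp only [Finset.mem_filter, Finset.mem_product, Finset.mem_univ, true_and] at *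
      exact hp.2
    · intro p hp
      simp only [Finset.mem_filter, Finset.mem_product, Finset.mem_univ, true_and] at *
      exact ⟨asymm hp, hp⟩
    · intro p _; rfl
    · intro p _; rfl
    · intro p _; rfl
  rw [h1, ← Finset.sum_add_distrib]

lemma sum_pairs (F : Finset (Fin q) → ℝ) :
    ∑ p ∈ (Finset.univ ×ˢ Finset.univ).filter (fun p : Fin q × Fin q => p.1 < p.2),
      F {p.1, p.2} = ∑ u ∈ twoSets q, F u := by
  refine Finset.sum_bij (fun p _ => ({p.1, p.2} : Finset (Fin q))) ?_ ?_ ?_ ?_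
  · intro p hp
    simp only [Finset.mem_filter] at hp
    simp only [twoSets, Finset.mem_filter, Finset.mem_univ, true_and]
    exact Finset.card_pair hp.2.ne
  · intro p hp r hr hc
    simp only [Finset.mem_filter] at hp hr
    have m1 : p.1 ∈ ({r.1, r.2} : Finset (Fin q)) := by rw [← hc]; simp
    have m2 : p.2 ∈ ({r.1, r.2} : Finset (Fin q)) := by rw [← hc]; simp
    simp only [Finset.mem_insert, Finset.mem_singleton] at m1 m2
    have e1 : (p.1 : ℕ) = r.1 ∨ (p.1 : ℕ) = r.2 := m1.imp (congrArg Fin.val) (congrArg Fin.val)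
    have e2 : (p.2 : ℕ) = r.1 ∨ (p.2 : ℕ) = r.2 := m2.imp (congrArg Fin.val) (congrArg Fin.val)
    have l1 : (p.1 : ℕ) < p.2 := hp.2
    have l2 : (r.1 : ℕ) < r.2 := hr.2
    have : (p.1 : ℕ) = r.1 ∧ (p.2 : ℕ) = r.2 := by omega
    exact Prod.ext (Fin.ext this.1) (Fin.ext this.2)
  · intro u hu
    simp only [twoSets, Finset.mem_filter, Finset.mem_univ, true_and] at hu
    obtain ⟨x, y, hxy, rfl⟩ := Finset.card_eq_two.1 hu
    rcases lt_or_gt_of_ne hxy with h | h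
    · exact ⟨(x, y), Finset.mem_filter.2 ⟨Finset.mem_product.2 ⟨Finset.mem_univ _, Finset.mem_univ _⟩, h⟩, rfl⟩
    · exact ⟨(y, x), Finset.mem_filter.2 ⟨Finset.mem_product.2 ⟨Finset.mem_univ _, Finset.mem_univ _⟩, h⟩,
        (Finset.pair_comm x y).symm ▸ rfl⟩
  · intro p _; rfl
lemma card_twoSets : (twoSets q).card = Nat.choose q 2 := by
  have : twoSets q = Finset.powersetCard 2 (Finset.univ : Finset (Fin q)) := by
    unfold twoSets
    rw [Finset.powersetCard_eq_filter, Finset.powerset_univ]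
  rw [this, Finset.card_powersetCard, Finset.card_univ, Fintype.card_fin]

lemma ip_homog2 {a b : Ext q} (ha : homog 2 a) :
    ip a b = ∑ u ∈ twoSets q, a u * b u := by
  unfold ip
  refine (Finset.sum_subset (Finset.subset_univ _) ?_).symm
  intro s _ hs
  rw [ha s (by simpa [twoSets] using hs), zero_mul]

lemma ortho_cols (ψ : Fin (Nat.choose q 2) → Ext q)
    (hψ : ∀ r, homog 2 (ψ r))
    (hon : ∀ r s, ip (ψ r) (ψ s) = if r = s then 1 else 0) :
    ∀ u ∈ twoSets q, ∀ v ∈ twoSets q,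
      ∑ r, ψ r u * ψ r v = if u = v then 1 else 0 := by
  classical
  have e : {u // u ∈ twoSets q} ≃ Fin (Nat.choose q 2) := by
    apply Fintype.equivFinOfCardEq
    rw [Fintype.card_coe, card_twoSets]
  set M : Matrix (Fin (Nat.choose q 2)) (Fin (Nat.choose q 2)) ℝ :=
    fun r t => ψ r ((e.symm t) : Finset (Fin q)) with hM
  have hMMT : M * M.transpose = 1 := by
    ext r s
    rw [Matrix.mul_apply, Matrix.one_apply]
    have h1 : ∑ t, M r t * M.transpose t s
        = ∑ u : {u // u ∈ twoSets q}, ψ r (u : Finset (Fin q)) * ψ s u := by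
      rw [← Equiv.sum_comp e.symm
        (fun u : {u // u ∈ twoSets q} => ψ r (u : Finset (Fin q)) * ψ s u)]
      rfl
    rw [h1, Finset.sum_coe_sort (twoSets q)
      (fun u => ψ r u * ψ s u), ← ip_homog2 (hψ r), hon]
  have hMTM : M.transpose * M = 1 := mul_eq_one_comm.1 hMMT
  intro u hu v hv
  have h2 := congrFun (congrFun hMTM (e ⟨u, hu⟩)) (e ⟨v, hv⟩)
  rw [Matrix.mul_apply, Matrix.one_apply] at h2
  have h3 : ∑ t, M.transpose (e ⟨u, hu⟩) t * M t (e ⟨v, hv⟩)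
      = ∑ r, ψ r u * ψ r v := by
    refine Finset.sum_congr rfl fun t _ => ?_
    simp only [Matrix.transpose_apply, hM, Equiv.symm_apply_apply]
    show ψ t ↑(e.symm (e ⟨u, hu⟩)) * ψ t v = _
    rw [Equiv.symm_apply_apply]
  rw [h3] at h2
  rw [h2]
  congr 1
  simp only [eq_iff_iff]
  constructor
  · intro hc
    have := e.injective hc
    exact congrArg Subtype.val this
  · intro hc
    congr 1
    exact Subtype.ext hc

lemma collapse {N : ℕ} (c : Fin N → Finset (Fin q) → ℝ)
    (horth : ∀ u ∈ twoSets q, ∀ v ∈ twoSets q,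
      ∑ r, c r u * c r v = if u = v then 1 else 0)
    (A B : Finset (Fin q) → ℝ) :
    ∑ r, (∑ u ∈ twoSets q, c r u * A u) * (∑ v ∈ twoSets q, c r v * B v)
      = ∑ u ∈ twoSets q, A u * B u := by
  have h1 : ∀ r : Fin N,
      (∑ u ∈ twoSets q, c r u * A u) * (∑ v ∈ twoSets q, c r v * B v)
      = ∑ u ∈ twoSets q, ∑ v ∈ twoSets q, (c r u * c r v) * (A u * B v) := by
    intro r
    rw [Finset.sum_mul_sum]
    exact Finset.sum_congr rfl fun u _ => Finset.sum_congr rfl fun v _ => by ring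
  calc ∑ r, (∑ u ∈ twoSets q, c r u * A u) * (∑ v ∈ twoSets q, c r v * B v)
      = ∑ r, ∑ u ∈ twoSets q, ∑ v ∈ twoSets q, (c r u * c r v) * (A u * B v) :=
        Finset.sum_congr rfl fun r _ => h1 r
    _ = ∑ u ∈ twoSets q, ∑ r, ∑ v ∈ twoSets q, (c r u * c r v) * (A u * B v) :=
        Finset.sum_comm
    _ = ∑ u ∈ twoSets q, ∑ v ∈ twoSets q, ∑ r, (c r u * c r v) * (A u * B v) :=
        Finset.sum_congr rfl fun u _ => Finset.sum_comm
    _ = ∑ u ∈ twoSets q, ∑ v ∈ twoSets q, (if u = v then 1 else 0) * (A u * B v) := by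
        refine Finset.sum_congr rfl fun u hu => Finset.sum_congr rfl fun v hv => ?_
        rw [← Finset.sum_mul, horth u hu v hv]
    _ = ∑ u ∈ twoSets q, A u * B u := by
        refine Finset.sum_congr rfl fun u hu => ?_
        rw [Finset.sum_eq_single u]
        · rw [if_pos rfl, one_mul]
        · intro v _ hv
          rw [if_neg (Ne.symm hv), zero_mul]
        · intro hc
          exact absurd hu hc
lemma exp_brkt {χ : Ext q} (h : homog 2 χ) (ω : Ext q) :
    brkt χ ω = ∑ u ∈ twoSets q, χ u • brkt (bF u) ω := by
  conv_lhs => rw [homog_expand h]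
  exact brkt_sum_smul_left _ _ _ _

lemma basis_indep (R : Ext q →ₗ[ℝ] Ext q) (ω φ : Ext q)
    (ψ : Fin (Nat.choose q 2) → Ext q) (hψ : ∀ r, homog 2 (ψ r))
    (hon : ∀ r s, ip (ψ r) (ψ s) = if r = s then 1 else 0) :
    ∑ r, ∑ s, ip (R (ψ r)) (ψ s) * ip (brkt (ψ r) ω) (brkt (ψ s) φ)
      = ∑ u ∈ twoSets q, ∑ v ∈ twoSets q,
          ip (R (bF u)) (bF v) * ip (brkt (bF u) ω) (brkt (bF v) φ) := by
  have horth := ortho_cols ψ hψ hon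
  have hs1 : ∀ r s, ip (R (ψ r)) (ψ s)
      = ∑ v ∈ twoSets q, ψ s v * ip (R (ψ r)) (bF v) := by
    intro r s
    conv_lhs => rw [homog_expand (hψ s)]
    rw [ip_sum_right]
    exact Finset.sum_congr rfl fun v _ => by rw [ip_smul_right]
  have hs2 : ∀ r s, ip (brkt (ψ r) ω) (brkt (ψ s) φ)
      = ∑ v ∈ twoSets q, ψ s v * ip (brkt (ψ r) ω) (brkt (bF v) φ) := by
    intro r s
    rw [exp_brkt (hψ s) φ, ip_sum_right]
    exact Finset.sum_congr rfl fun v _ => by rw [ip_smul_right]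
  calc ∑ r, ∑ s, ip (R (ψ r)) (ψ s) * ip (brkt (ψ r) ω) (brkt (ψ s) φ)
      = ∑ r, ∑ v ∈ twoSets q,
          ip (R (ψ r)) (bF v) * ip (brkt (ψ r) ω) (brkt (bF v) φ) := by
        refine Finset.sum_congr rfl fun r _ => ?_
        rw [← collapse (fun s v => ψ s v) horth (fun v => ip (R (ψ r)) (bF v))
          (fun v => ip (brkt (ψ r) ω) (brkt (bF v) φ))]
        exact Finset.sum_congr rfl fun s _ => by rw [hs1 r s, hs2 r s]
    _ = ∑ v ∈ twoSets q, ∑ r,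
          ip (R (ψ r)) (bF v) * ip (brkt (ψ r) ω) (brkt (bF v) φ) := Finset.sum_comm
    _ = ∑ v ∈ twoSets q, ∑ u ∈ twoSets q,
          ip (R (bF u)) (bF v) * ip (brkt (bF u) ω) (brkt (bF v) φ) := by
        refine Finset.sum_congr rfl fun v hv => ?_
        have e1 : ∀ r, ip (R (ψ r)) (bF v)
            = ∑ u ∈ twoSets q, ψ r u * ip (R (bF u)) (bF v) := by
          intro r
          conv_lhs => rw [homog_expand (hψ r)]
          rw [map_sum, ip_sum_left]
          refine Finset.sum_congr rfl fun u _ => ?_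
          rw [LinearMap.map_smul, ip_smul_left]
        have e2 : ∀ r, ip (brkt (ψ r) ω) (brkt (bF v) φ)
            = ∑ u ∈ twoSets q, ψ r u * ip (brkt (bF u) ω) (brkt (bF v) φ) := by
          intro r
          rw [exp_brkt (hψ r) ω, ip_sum_left]
          exact Finset.sum_congr rfl fun u _ => by rw [ip_smul_left]
        rw [← collapse (fun r u => ψ r u) horth (fun u => ip (R (bF u)) (bF v))
          (fun u => ip (brkt (bF u) ω) (brkt (bF v) φ))]
        exact Finset.sum_congr rfl fun r _ => by rw [e1 r, e2 r]
    _ = ∑ u ∈ twoSets q, ∑ v ∈ twoSets q,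
          ip (R (bF u)) (bF v) * ip (brkt (bF u) ω) (brkt (bF v) φ) := Finset.sum_comm
lemma homog_iB2 {η : Ext q} (h : homog 2 η) (k : Fin q) : homog 1 (iB k η) :=
  homog_iB (n := 1) h k

lemma step1 (R : Ext q →ₗ[ℝ] Ext q)
    (hR2 : ∀ η : Ext q, homog 2 η → homog 2 (R η)) (ω φ : Ext q) :
    ip (∑ j : Fin q, ∑ i : Fin q,
        wB j (iB i (∑ k : Fin q, wM (iB k (R (w2 (eB j) (eB i)))) (iB k ω)))) φ
    = ∑ j : Fin q, ∑ i : Fin q, ∑ k : Fin q, ∑ m : Fin q,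
        ip (R (w2 (eB j) (eB i))) (w2 (eB k) (eB m))
          * ip (wB m (iB k ω)) (wB i (iB j φ)) := by
  rw [ip_sum_left]
  refine Finset.sum_congr rfl fun j _ => ?_
  rw [ip_sum_left]
  refine Finset.sum_congr rfl fun i _ => ?_
  have hη : homog 2 (R (w2 (eB j) (eB i))) := hR2 _ (homog_w2 j i)
  have hV : (∑ k : Fin q, wM (iB k (R (w2 (eB j) (eB i)))) (iB k ω))
      = ∑ k : Fin q, ∑ m : Fin q,
          (iB k (R (w2 (eB j) (eB i)))) {m} • wB m (iB k ω) :=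
    Finset.sum_congr rfl fun k _ => wM_one_form (homog_iB2 hη k) _
  rw [hV, iB_sum, wB_sum, ip_sum_left]
  refine Finset.sum_congr rfl fun k _ => ?_
  rw [iB_sum, wB_sum, ip_sum_left]
  refine Finset.sum_congr rfl fun m _ => ?_
  rw [iB_smul, wB_smul, ip_smul_left, iB_coeff, ip_wB, ip_iB]

lemma sum4_swap (f : Fin q → Fin q → Fin q → Fin q → ℝ) :
    ∑ j : Fin q, ∑ i : Fin q, ∑ k : Fin q, ∑ m : Fin q, f k m j i
    = ∑ a : Fin q, ∑ b : Fin q, ∑ c : Fin q, ∑ d : Fin q, f a b c d := by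
  have h1 : ∀ (F : Fin q → Fin q → ℝ),
      ∑ j : Fin q, ∑ i : Fin q, F j i
      = ∑ p ∈ (Finset.univ ×ˢ Finset.univ : Finset (Fin q × Fin q)), F p.1 p.2 :=
    fun F => (Finset.sum_product' Finset.univ Finset.univ F).symm
  calc ∑ j : Fin q, ∑ i : Fin q, ∑ k : Fin q, ∑ m : Fin q, f k m j i
      = ∑ p ∈ (Finset.univ ×ˢ Finset.univ : Finset (Fin q × Fin q)),
          ∑ k : Fin q, ∑ m : Fin q, f k m p.1 p.2 :=
        h1 (fun j i => ∑ k : Fin q, ∑ m : Fin q, f k m j i)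
    _ = ∑ p ∈ (Finset.univ ×ˢ Finset.univ : Finset (Fin q × Fin q)),
          ∑ r ∈ (Finset.univ ×ˢ Finset.univ : Finset (Fin q × Fin q)),
            f r.1 r.2 p.1 p.2 :=
        Finset.sum_congr rfl fun p _ => h1 (fun k m => f k m p.1 p.2)
    _ = ∑ r ∈ (Finset.univ ×ˢ Finset.univ : Finset (Fin q × Fin q)),
          ∑ p ∈ (Finset.univ ×ˢ Finset.univ : Finset (Fin q × Fin q)),
            f r.1 r.2 p.1 p.2 := Finset.sum_comm
    _ = ∑ r ∈ (Finset.univ ×ˢ Finset.univ : Finset (Fin q × Fin q)),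
          ∑ c : Fin q, ∑ d : Fin q, f r.1 r.2 c d :=
        Finset.sum_congr rfl fun r _ => (h1 (fun c d => f r.1 r.2 c d)).symm
    _ = ∑ a : Fin q, ∑ b : Fin q, ∑ c : Fin q, ∑ d : Fin q, f a b c d :=
        (h1 (fun a b => ∑ c : Fin q, ∑ d : Fin q, f a b c d)).symm

lemma step2 (R : Ext q →ₗ[ℝ] Ext q)
    (hsym : ∀ a b : Ext q, homog 2 a → homog 2 b → ip (R a) b = ip a (R b))
    (ω φ : Ext q) :
    ∑ j : Fin q, ∑ i : Fin q, ∑ k : Fin q, ∑ m : Fin q,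
        ip (R (w2 (eB j) (eB i))) (w2 (eB k) (eB m))
          * ip (wB m (iB k ω)) (wB i (iB j φ))
    = ∑ a : Fin q, ∑ b : Fin q, ∑ c : Fin q, ∑ d : Fin q,
        ip (R (w2 (eB a) (eB b))) (w2 (eB c) (eB d))
          * ip (wB b (iB a ω)) (wB d (iB c φ)) := by
  have hterm : ∀ j i k m : Fin q,
      ip (R (w2 (eB j) (eB i))) (w2 (eB k) (eB m))
      = ip (R (w2 (eB k) (eB m))) (w2 (eB j) (eB i)) := by
    intro j i k m
    rw [hsym _ _ (homog_w2 j i) (homog_w2 k m), ip_comm]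
  calc ∑ j : Fin q, ∑ i : Fin q, ∑ k : Fin q, ∑ m : Fin q,
        ip (R (w2 (eB j) (eB i))) (w2 (eB k) (eB m))
          * ip (wB m (iB k ω)) (wB i (iB j φ))
      = ∑ j : Fin q, ∑ i : Fin q, ∑ k : Fin q, ∑ m : Fin q,
          ip (R (w2 (eB k) (eB m))) (w2 (eB j) (eB i))
            * ip (wB m (iB k ω)) (wB i (iB j φ)) := by
        refine Finset.sum_congr rfl fun j _ => Finset.sum_congr rfl fun i _ =>
          Finset.sum_congr rfl fun k _ => Finset.sum_congr rfl fun m _ => ?_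
        rw [hterm]
    _ = ∑ a : Fin q, ∑ b : Fin q, ∑ c : Fin q, ∑ d : Fin q,
          ip (R (w2 (eB a) (eB b))) (w2 (eB c) (eB d))
            * ip (wB b (iB a ω)) (wB d (iB c φ)) :=
        sum4_swap (fun a b c d =>
          ip (R (w2 (eB a) (eB b))) (w2 (eB c) (eB d))
            * ip (wB b (iB a ω)) (wB d (iB c φ)))
lemma step3 (R : Ext q →ₗ[ℝ] Ext q) (ω φ : Ext q) :
    ∑ a : Fin q, ∑ b : Fin q, ∑ c : Fin q, ∑ d : Fin q,
        ip (R (w2 (eB a) (eB b))) (w2 (eB c) (eB d))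
          * ip (wB b (iB a ω)) (wB d (iB c φ))
    = (1 / 4 : ℝ) * ∑ u ∈ twoSets q, ∑ v ∈ twoSets q,
        ip (R (bF u)) (bF v) * ip (brkt (bF u) ω) (brkt (bF v) φ) := by
  set g : Fin q → Fin q → Fin q → Fin q → ℝ := fun a b c d =>
    ip (R (w2 (eB a) (eB b))) (w2 (eB c) (eB d))
      * ip (wB b (iB a ω)) (wB d (iB c φ)) with hg
  set P := (Finset.univ ×ˢ Finset.univ).filter
    (fun p : Fin q × Fin q => p.1 < p.2) with hP
  set K : Finset (Fin q) → Finset (Fin q) → ℝ := fun u v =>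
    ip (R (bF u)) (bF v) * ip (brkt (bF u) ω) (brkt (bF v) φ) with hK
  have key : ∀ p ∈ P, ∀ r ∈ P,
      (g p.1 p.2 r.1 r.2 + g p.1 p.2 r.2 r.1)
        + (g p.2 p.1 r.1 r.2 + g p.2 p.1 r.2 r.1)
      = (1 / 4 : ℝ) * K {p.1, p.2} {r.1, r.2} := by
    intro p hp r hr
    have hp' : p.1 < p.2 := (Finset.mem_filter.1 hp).2
    have hr' : r.1 < r.2 := (Finset.mem_filter.1 hr).2
    simp only [hg, hK]
    rw [w2_lt hp', w2_lt hr', w2_gt hp', w2_gt hr', brkt_pair hp', brkt_pair hr']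
    simp only [map_neg, ip_neg_left, ip_neg_right, ip_smul_left, ip_smul_right,
      ip_sub_left, ip_sub_right]
    ring
  have inner_split : ∀ a b : Fin q,
      ∑ c : Fin q, ∑ d : Fin q, g a b c d
      = ∑ r ∈ P, (g a b r.1 r.2 + g a b r.2 r.1) := by
    intro a b
    exact sum_split (g a b) fun c => by
      simp only [hg, w2_self, ip_zero_right, zero_mul]
  calc ∑ a : Fin q, ∑ b : Fin q, ∑ c : Fin q, ∑ d : Fin q, g a b c d
      = ∑ a : Fin q, ∑ b : Fin q, ∑ r ∈ P, (g a b r.1 r.2 + g a b r.2 r.1) :=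
        Finset.sum_congr rfl fun a _ => Finset.sum_congr rfl fun b _ =>
          inner_split a b
    _ = ∑ p ∈ P, (∑ r ∈ P, (g p.1 p.2 r.1 r.2 + g p.1 p.2 r.2 r.1)
          + ∑ r ∈ P, (g p.2 p.1 r.1 r.2 + g p.2 p.1 r.2 r.1)) := by
        rw [hP]
        exact sum_split (fun a b => ∑ r ∈ P, (g a b r.1 r.2 + g a b r.2 r.1))
          fun a => Finset.sum_eq_zero fun r _ => by
            simp only [hg, w2_self, map_zero, ip_zero_left, zero_mul, add_zero]
    _ = ∑ p ∈ P, ∑ r ∈ P, ((g p.1 p.2 r.1 r.2 + g p.1 p.2 r.2 r.1)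
          + (g p.2 p.1 r.1 r.2 + g p.2 p.1 r.2 r.1)) :=
        Finset.sum_congr rfl fun p _ => (Finset.sum_add_distrib).symm
    _ = ∑ p ∈ P, ∑ r ∈ P, (1 / 4 : ℝ) * K {p.1, p.2} {r.1, r.2} :=
        Finset.sum_congr rfl fun p hp => Finset.sum_congr rfl fun r hr =>
          key p hp r hr
    _ = ∑ p ∈ P, (1 / 4 : ℝ) * ∑ v ∈ twoSets q, K {p.1, p.2} v := by
        refine Finset.sum_congr rfl fun p _ => ?_
        rw [← Finset.mul_sum]
        congr 1
        rw [hP]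
        exact sum_pairs (fun v => K {p.1, p.2} v)
    _ = (1 / 4 : ℝ) * ∑ u ∈ twoSets q, ∑ v ∈ twoSets q, K u v := by
        rw [← Finset.mul_sum]
        congr 1
        rw [hP]
        exact sum_pairs (fun u => ∑ v ∈ twoSets q, K u v)
/-- Equation (3.4) of the paper. For a symmetric endomorphism `R` of
`Λ²V`, letting `ρ(η)ω = Σ_k (e_k ⌟ η) ∧ (e_k ⌟ ω)`, one has, for all `p`-forms `ω, φ`
and any orthonormal basis `{ψ_r}` of `Λ²V`,
`⟨Σ_{i,j} e_j ∧ (e_i ⌟ ρ(R(e_j∧e_i))ω), φ⟩ = (1/4) Σ_{r,s} ⟨Rψ_r,ψ_s⟩⟨[ψ_r,ω],[ψ_s,φ]⟩`;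
in particular the right-hand side does not depend on the chosen orthonormal basis. -/
theorem statement_3 {q p : ℕ} (hq : 1 ≤ q) (R : Ext q →ₗ[ℝ] Ext q)
    (hR2 : ∀ η : Ext q, homog 2 η → homog 2 (R η))
    (hsym : ∀ a b : Ext q, homog 2 a → homog 2 b → ip (R a) b = ip a (R b))
    (ω φ : Ext q) (hω : homog p ω) (hφ : homog p φ)
    (ψ : Fin (Nat.choose q 2) → Ext q)
    (hψ : ∀ r, homog 2 (ψ r))
    (hon : ∀ r s, ip (ψ r) (ψ s) = if r = s then 1 else 0) :
    ip (∑ j : Fin q, ∑ i : Fin q,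
        wB j (iB i (∑ k : Fin q, wM (iB k (R (w2 (eB j) (eB i)))) (iB k ω)))) φ
      = (1 / 4 : ℝ) * ∑ r, ∑ s,
          ip (R (ψ r)) (ψ s) * ip (brkt (ψ r) ω) (brkt (ψ s) φ) := by
  rw [step1 R hR2 ω φ, step2 R hsym ω φ, step3 R ω φ, basis_indep R ω φ ψ hψ hon]

end
end Paper
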